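/- Fix $d \ge 1$, an orthonormal basis $a_1,\dots,a_d$ of $\mathbb{R}^d$, $b \in \{-1,1\}^d$, and an index $i \in \{1,\dots,d\}$. For $w$ in the closed unit ball $\mathcal{X}$, define $f_j(w) = |\langle a_j, w\rangle - b_j/\sqrt{d}|$, $\mathcal{X}_i = \{w \in \mathcal{X} : f_i(w) > f_j(w) \text{ for all } j < i,\ f_i(w) \ge f_j(w) \text{ for all } j \ge i,\ |\langle a_i, w\rangle| \le 1/\sqrt{d}\}$ and $\mathcal{X}_i' = \{w \in \mathcal{X} : \langle a_i b_i, w\rangle < \langle a_j b_j, w\rangle \text{ for all } j < i,\ \langle a_i b_i, w\rangle \le \langle a_j b_j, w\rangle \text{ for all } j \ge i,\ |\langle a_i b_i, w\rangle| \le 1/\sqrt{d}\}$. Then $\mathcal{X}_i \subseteq \mathcal{X}_i'$. -/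
import Mathlib


open scoped RealInnerProductSpace

/-- Lemma 1: `𝒳ᵢ ⊆ 𝒳ᵢ'`. -/
theorem stmt2 (d : ℕ) (hd : 0 < d)
    (a : OrthonormalBasis (Fin d) ℝ (EuclideanSpace ℝ (Fin d)))
    (b : Fin d → ℝ) (hb : ∀ i, b i = 1 ∨ b i = -1)
    (i : Fin d)
    (X : Set (EuclideanSpace ℝ (Fin d)))
    (hX : X = Metric.closedBall (0 : EuclideanSpace ℝ (Fin d)) 1)
    (f : Fin d → EuclideanSpace ℝ (Fin d) → ℝ)
    (hf : ∀ j x, f j x = |⟪a j, x⟫ - b j / Real.sqrt d|)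
    (Xi Xi' : Set (EuclideanSpace ℝ (Fin d)))
    (hXi : Xi = {w ∈ X | (∀ j, j < i → f i w > f j w) ∧ (∀ j, i ≤ j → f i w ≥ f j w) ∧
      |⟪a i, w⟫| ≤ 1 / Real.sqrt d})
    (hXi' : Xi' = {w ∈ X | (∀ j, j < i → ⟪b i • a i, w⟫ < ⟪b j • a j, w⟫) ∧
      (∀ j, i ≤ j → ⟪b i • a i, w⟫ ≤ ⟪b j • a j, w⟫) ∧
      |⟪b i • a i, w⟫| ≤ 1 / Real.sqrt d}) :
    Xi ⊆ Xi' := by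
  subst hXi hXi'
  intro w hw
  obtain ⟨hwX, h1, h2, h3⟩ := hw
  set c : ℝ := 1 / Real.sqrt d with hc
  have hb1 : ∀ j, |b j| = 1 := by
    intro j; rcases hb j with h | h <;> simp [h]
  have hbsq : ∀ j, b j * b j = 1 := by
    intro j; rcases hb j with h | h <;> simp [h] <;> ring
  set t : Fin d → ℝ := fun j => b j * ⟪a j, w⟫ with ht
  have hinner : ∀ j, ⟪b j • a j, w⟫ = t j := by
    intro j; rw [real_inner_smul_left]
  have hft : ∀ j, f j w = |t j - c| := by
    intro j
    rw [hf]
    have : t j - c = b j * (⟪a j, w⟫ - b j / Real.sqrt d) := by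
      rcases hb j with h | h <;> simp only [ht, h, hc] <;> ring
    rw [this, abs_mul, hb1, one_mul]
  have hti : |t i| ≤ c := by
    rw [ht]; simpa [abs_mul, hb1 i] using h3
  have htile : t i ≤ c := (abs_le.1 hti).2
  have hfi : f i w = c - t i := by
    rw [hft, abs_sub_comm, abs_of_nonneg (by linarith)]
  have key : ∀ j, c - t j ≤ |t j - c| := by
    intro j; rw [abs_sub_comm]; exact le_abs_self _
  refine ⟨hwX, ?_, ?_, ?_⟩
  · intro j hj
    have := h1 j hj
    rw [hfi, hft] at this
    rw [hinner, hinner]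
    have := key j
    linarith
  · intro j hj
    have := h2 j hj
    rw [hfi, hft] at this
    rw [hinner, hinner]
    have := key j
    linarith
  · rw [hinner]; exact hti
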